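/- With μ_n(ψ) as defined for the arc transform with fixed half-length ψ ∈ [0, π], for even n = 2m one has lim_{m→∞} ((4m+1)/4) μ_{2m}(ψ)² = 4πψ for ψ ∈ [0, π/2] and = 12πψ - 4π² for ψ ∈ [π/2, π]. -/

import Mathlib

open Real Finset Filter
open scoped Nat

/-- The square `|P̃_n^j(0)|²` of the normalized associated Legendre function at zero,
for integer order `j` with `|j| ≤ n`. -/
noncomputable def ptildeSqZ (n : ℕ) (j : ℤ) : ℝ :=
  if Even ((n : ℤ) + j) then
    (2 * n + 1) / (4 * Real.pi) *
      ((Nat.doubleFactorial (n - j.natAbs - 1) * Nat.doubleFactorial (n + j.natAbs - 1) : ℝ) /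
        (Nat.doubleFactorial (n - j.natAbs) * Nat.doubleFactorial (n + j.natAbs) : ℝ))
  else 0

/-- The function `s_j(ψ)`: `2ψ` for `j = 0` and `2 sin(jψ)/j` otherwise. -/
noncomputable def sArc (j : ℤ) (ψ : ℝ) : ℝ :=
  if j = 0 then 2 * ψ else 2 * Real.sin (j * ψ) / j

/-- The squared singular values `μ_n(ψ)²` of the arc transform with fixed half-length `ψ`. -/
noncomputable def muSq (n : ℕ) (ψ : ℝ) : ℝ :=
  8 * Real.pi ^ 2 / (2 * n + 1) *
    ∑ j ∈ Finset.Icc (-(n : ℤ)) (n : ℤ), ptildeSqZ n j * sArc j ψ ^ 2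



noncomputable def rr (a : ℕ) : ℝ := (Nat.doubleFactorial (2*a-1) : ℝ) / (Nat.doubleFactorial (2*a) : ℝ)

lemma df_pos (n : ℕ) : (0:ℝ) < (Nat.doubleFactorial n : ℝ) := by
  exact_mod_cast Nat.doubleFactorial_pos n

lemma rr_pos (a : ℕ) : 0 < rr a := div_pos (df_pos _) (df_pos _)

lemma ptilde_eq (m l : ℕ) (h : l ≤ m) :
    ptildeSqZ (2*m) ((2*l : ℕ) : ℤ) = (4*(m:ℝ)+1)/(4*π) * (rr (m-l) * rr (m+l)) := by
  unfold ptildeSqZ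
  rw [if_pos (by push_cast; exact (even_two_mul (m:ℤ)).add (even_two_mul (l:ℤ)))]
  rw [Int.natAbs_natCast]
  have e1 : 2*m - 2*l = 2*(m-l) := by omega
  have e2 : 2*m + 2*l = 2*(m+l) := by omega
  rw [e1, e2]
  unfold rr
  rw [div_mul_div_comm]
  push_cast
  ring

lemma rr_succ (a : ℕ) : rr (a+1) = rr a * ((2*a+1)/(2*a+2)) := by
  unfold rr
  have h1 : 2*(a+1)-1 = 2*a+1 := by omega
  have h2 : 2*(a+1) = 2*a+2 := by omega
  rw [h1, h2]
  have e1 : (2*a+1).doubleFactorial = (2*a+1) * (2*a-1).doubleFactorial := by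
    rcases a with _ | b
    · rfl
    · have : 2*(b+1)+1 = (2*b+1)+2 := by omega
      rw [this, Nat.doubleFactorial_add_two]
      congr 2
  have e2 : (2*a+2).doubleFactorial = (2*a+2) * (2*a).doubleFactorial := Nat.doubleFactorial_add_two _
  rw [e1, e2]
  push_cast
  have := df_pos (2*a-1); have := df_pos (2*a)
  field_simp

noncomputable def qq (a : ℕ) : ℝ := rr a ^ 2 * (2*a+1)

lemma qq_pos (a : ℕ) : 0 < qq a := mul_pos (pow_pos (rr_pos a) 2) (by positivity)

lemma qq_le_one (a : ℕ) : qq a ≤ 1 := by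
  induction a with
  | zero => unfold qq rr; norm_num
  | succ n ih =>
    unfold qq at ih ⊢
    rw [rr_succ]
    push_cast
    have hn : (0:ℝ) ≤ (n:ℝ) := n.cast_nonneg
    calc (rr n * ((2*n+1)/(2*n+2)))^2 * (2*(n+1)+1)
        = (rr n ^2 * (2*n+1)) * ((2*n+1)*(2*n+3)/(2*n+2)^2) := by field_simp; ring
      _ ≤ 1 * 1 := by
          apply mul_le_mul ih ?_ (by positivity) zero_le_one
          rw [div_le_one (by positivity)]
          nlinarith
      _ = 1 := by norm_num

lemma fact_two_mul (n : ℕ) : (2*n)! = (2*n).doubleFactorial * (2*n-1).doubleFactorial := by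
  rcases n with _ | b
  · rfl
  · have : 2*(b+1) = (2*b+1)+1 := by omega
    rw [this, Nat.factorial_eq_mul_doubleFactorial]
    congr 1

lemma qq_eq (a : ℕ) : qq a = (Real.Wallis.W a)⁻¹ := by
  rw [Real.Wallis.W_eq_factorial_ratio]
  unfold qq rr
  have hdf : ((2*a).doubleFactorial : ℝ) = 2^a * a ! := by exact_mod_cast Nat.doubleFactorial_two_mul a
  have hfact : ((2*a)! : ℝ) = (2*a).doubleFactorial * (2*a-1).doubleFactorial := by
    exact_mod_cast fact_two_mul a
  have h1 : (0:ℝ) < ((2*a).doubleFactorial : ℝ) := df_pos _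
  have h2 : (0:ℝ) < ((2*a-1).doubleFactorial : ℝ) := df_pos _
  have h3 : (0:ℝ) < (a ! : ℝ) := by exact_mod_cast Nat.factorial_pos _
  rw [hfact, hdf]
  have h4 : (0:ℝ) < 2*(a:ℝ)+1 := by positivity
  field_simp
  ring

lemma tendsto_qq : Tendsto qq atTop (nhds (2/π)) := by
  have h := Real.tendsto_prod_pi_div_two.inv₀ (ne_of_gt Real.pi_div_two_pos)
  rw [inv_div] at h
  exact h.congr (fun a => (qq_eq a).symm)

lemma rr_sq (a : ℕ) : rr a ^ 2 = qq a / (2*a+1) := by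
  unfold qq; field_simp

lemma ptilde_nonneg (n : ℕ) (j : ℤ) : 0 ≤ ptildeSqZ n j := by
  unfold ptildeSqZ
  split
  · have := Real.pi_pos
    positivity
  · exact le_refl 0

lemma tendsto_aux (c : ℝ) : Tendsto (fun m : ℕ => (4*(m:ℝ)+1)/(2*(m:ℝ)+c)) atTop (nhds 2) := by
  have hc : Tendsto (fun m : ℕ => c/(m:ℝ)) atTop (nhds 0) := by
    have := tendsto_one_div_atTop_nhds_zero_nat.const_mul c
    simpa [mul_one_div, div_eq_mul_inv] using this
  have h1 : Tendsto (fun m : ℕ => (4 + 1/(m:ℝ))/(2 + c/(m:ℝ))) atTop (nhds ((4+0)/(2+0))) := by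
    exact (tendsto_const_nhds.add tendsto_one_div_atTop_nhds_zero_nat).div
      (tendsto_const_nhds.add hc) (by norm_num)
  norm_num at h1
  apply h1.congr'
  have hb : ∀ᶠ m : ℕ in atTop, (|c| : ℝ) < m ∧ 1 ≤ m := by
    filter_upwards [eventually_gt_atTop ⌈|c|⌉₊, eventually_ge_atTop 1] with m h1 h2
    exact ⟨lt_of_le_of_lt (Nat.le_ceil _) (by exact_mod_cast h1), h2⟩
  filter_upwards [hb] with m ⟨hm1, hm2⟩
  have hm0 : (0:ℝ) < m := lt_of_le_of_lt (abs_nonneg c) hm1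
  have hd : (0:ℝ) < 2*(m:ℝ)+c := by
    have : -(m:ℝ) ≤ c := neg_le_of_abs_le hm1.le
    linarith
  field_simp

lemma tendsto_ptilde (l : ℕ) :
    Tendsto (fun m : ℕ => ptildeSqZ (2*m) ((2*l : ℕ) : ℤ)) atTop (nhds ((π^2)⁻¹)) := by
  have hπ := Real.pi_pos
  set h : ℕ → ℝ := fun m => (qq (m-l) * qq (m+l)) *
    ((4*(m:ℝ)+1)^2/((16*π^2)*((2*((m-l:ℕ):ℝ)+1)*(2*((m+l:ℕ):ℝ)+1)))) with hh_def
  have hA : Tendsto (fun m : ℕ => (4*(m:ℝ)+1)^2/((16*π^2)*((2*((m-l:ℕ):ℝ)+1)*(2*((m+l:ℕ):ℝ)+1))))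
      atTop (nhds (2*2*(1/(16*π^2)))) := by
    have := ((tendsto_aux (1-2*l)).mul (tendsto_aux (1+2*l))).mul
      (tendsto_const_nhds (x := 1/(16*π^2)))
    apply this.congr'
    filter_upwards [eventually_ge_atTop l] with m hm
    have c1 : ((m-l:ℕ):ℝ) = (m:ℝ) - l := by
      rw [Nat.cast_sub hm]
    have c2 : ((m+l:ℕ):ℝ) = (m:ℝ) + l := by push_cast; ring
    rw [c1, c2]
    have d1 : (0:ℝ) < 2*((m:ℝ)-l)+1 := by
      have : (l:ℝ) ≤ m := by exact_mod_cast hm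
      linarith
    have d2 : (0:ℝ) < 2*((m:ℝ)+l)+1 := by positivity
    have e1 : 2*((m:ℝ)-l)+1 = 2*(m:ℝ)+(1-2*l) := by ring
    have e2 : 2*((m:ℝ)+l)+1 = 2*(m:ℝ)+(1+2*l) := by ring
    rw [← e1, ← e2]
    field_simp
  have hht : Tendsto h atTop (nhds ((2/π) * (2/π) * (2*2*(1/(16*π^2))))) :=
    ((tendsto_qq.comp (tendsto_sub_atTop_nat l)).mul
      (tendsto_qq.comp (tendsto_add_atTop_nat l))).mul hA
  have hval : (2/π) * (2/π) * (2*2*(1/(16*π^2))) = ((π^2)⁻¹)^2 := by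
    field_simp
    ring
  rw [hval] at hht
  have := hht.sqrt
  rw [Real.sqrt_sq (by positivity)] at this
  apply this.congr'
  filter_upwards [eventually_ge_atTop l] with m hm
  rw [ptilde_eq m l hm]
  have : ((4*(m:ℝ)+1)/(4*π) * (rr (m-l) * rr (m+l)))^2 = h m := by
    simp only [hh_def]
    rw [mul_pow, mul_pow, rr_sq, rr_sq]
    field_simp
    ring
  have h1 := rr_pos (m-l); have h2 := rr_pos (m+l)
  rw [← this, Real.sqrt_sq (by positivity)]

lemma ptilde_le (m l : ℕ) (h1 : 1 ≤ l) (hlm : l ≤ m) :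
    ptildeSqZ (2*m) ((2*l : ℕ) : ℤ) ≤ Real.sqrt 5 * Real.sqrt l / (2*π) := by
  have hπ := Real.pi_pos
  rw [ptilde_eq m l hlm]
  set x := (4*(m:ℝ)+1)/(4*π) * (rr (m-l) * rr (m+l)) with hx_def
  have hrr1 := rr_pos (m-l); have hrr2 := rr_pos (m+l)
  have hx0 : 0 ≤ x := by positivity
  have ha : ((m-l:ℕ):ℝ) = (m:ℝ)-(l:ℝ) := by rw [Nat.cast_sub hlm]
  have hl1 : (1:ℝ) ≤ (l:ℝ) := by exact_mod_cast h1
  have hla : (l:ℝ) ≤ (m:ℝ) := by exact_mod_cast hlm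
  have hA : (1:ℝ) ≤ 2*((m:ℝ)-l)+1 := by linarith
  have hm0 : (0:ℝ) ≤ (m:ℝ) := Nat.cast_nonneg m
  have hB : (1:ℝ) ≤ 2*((m:ℝ)+l)+1 := by linarith
  have key : (4*(m:ℝ)+1)^2 ≤ 20*l*((2*((m:ℝ)-l)+1)*(2*((m:ℝ)+l)+1)) := by
    nlinarith [mul_nonneg (sub_nonneg.2 hla) (sub_nonneg.2 hl1),
      mul_nonneg (mul_nonneg (sub_nonneg.2 hl1) (sub_nonneg.2 hA)) (sub_nonneg.2 hA),
      mul_nonneg (sub_nonneg.2 hl1) (sub_nonneg.2 hA), sq_nonneg ((m:ℝ)-l),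
      sq_nonneg ((m:ℝ)+l)]
  have hx2 : x^2 ≤ 5*l/(4*π^2) := by
    have e : x^2 = ((4*(m:ℝ)+1)^2/(16*π^2)) * ((qq (m-l)/(2*((m-l:ℕ):ℝ)+1)) * (qq (m+l)/(2*((m+l:ℕ):ℝ)+1))) := by
      have d1 : (2*((m-l:ℕ):ℝ)+1) ≠ 0 := by positivity
      have d2 : (2*((m+l:ℕ):ℝ)+1) ≠ 0 := by positivity
      have d3 : (4*π) ≠ 0 := by positivity
      rw [hx_def, mul_pow, mul_pow, rr_sq, rr_sq]
      field_simp
      ring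
    have hc2 : ((m+l:ℕ):ℝ) = (m:ℝ)+(l:ℝ) := by push_cast; ring
    rw [e, ha, hc2]
    have hq1 := qq_le_one (m-l); have hq2 := qq_le_one (m+l)
    have hq1' := qq_pos (m-l); have hq2' := qq_pos (m+l)
    have hA0 : (0:ℝ) < 2*((m:ℝ)-l)+1 := by linarith
    have hB0 : (0:ℝ) < 2*((m:ℝ)+l)+1 := by linarith
    calc ((4*(m:ℝ)+1)^2/(16*π^2)) * ((qq (m-l)/(2*((m:ℝ)-l)+1)) * (qq (m+l)/(2*((m:ℝ)+l)+1)))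
        ≤ ((4*(m:ℝ)+1)^2/(16*π^2)) * ((1/(2*((m:ℝ)-l)+1)) * (1/(2*((m:ℝ)+l)+1))) := by
          gcongr
      _ ≤ 5*l/(4*π^2) := by
          rw [div_mul_eq_mul_div, div_le_div_iff₀ (by positivity) (by positivity)]
          calc (4*(m:ℝ)+1)^2 * ((1/(2*((m:ℝ)-l)+1))*(1/(2*((m:ℝ)+l)+1))) * (4*π^2)
              = ((4*(m:ℝ)+1)^2/((2*((m:ℝ)-l)+1)*(2*((m:ℝ)+l)+1))) * (4*π^2) := by
                field_simp
            _ ≤ (20*l) * (4*π^2) := by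
                apply mul_le_mul_of_nonneg_right ?_ (by positivity)
                rw [div_le_iff₀ (by positivity)]
                linarith [key]
            _ = 5*(l:ℝ)*(16*π^2) := by ring
  have hb2 : (Real.sqrt 5 * Real.sqrt l / (2*π))^2 = 5*l/(4*π^2) := by
    rw [div_pow, mul_pow, Real.sq_sqrt (by norm_num), Real.sq_sqrt (Nat.cast_nonneg l)]
    ring
  calc x = Real.sqrt (x^2) := (Real.sqrt_sq hx0).symm
    _ ≤ Real.sqrt (5*l/(4*π^2)) := Real.sqrt_le_sqrt hx2
    _ = Real.sqrt ((Real.sqrt 5 * Real.sqrt l / (2*π))^2) := by rw [hb2]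
    _ = Real.sqrt 5 * Real.sqrt l / (2*π) := Real.sqrt_sq (by positivity)

lemma bern_two : _root_.bernoulli 2 = 1/6 := by
  rw [bernoulli_eq_bernoulli'_of_ne_one (by norm_num), bernoulli'_two]

lemma bern2_eval (x : ℝ) :
    (Polynomial.map (algebraMap ℚ ℝ) (Polynomial.bernoulli 2)).eval x = x^2 - x + 1/6 := by
  simp [Polynomial.bernoulli_def, Finset.sum_range_succ, _root_.bernoulli_zero,
    _root_.bernoulli_one, bern_two, Polynomial.eval_monomial]
  norm_num
  ring

lemma hasSum_sin_sq {θ : ℝ} (h0 : 0 ≤ θ) (h1 : θ ≤ π) :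
    HasSum (fun k : ℕ => Real.sin (k*θ)^2/(k:ℝ)^2) ((π*θ - θ^2)/2) := by
  have hπ := Real.pi_pos
  have hx : θ/π ∈ Set.Icc (0:ℝ) 1 := ⟨by positivity, by rw [div_le_one hπ]; exact h1⟩
  have hc := hasSum_one_div_nat_pow_mul_cos (k := 1) one_ne_zero hx
  rw [bern2_eval] at hc
  have hc' : HasSum (fun n : ℕ => 1/(n:ℝ)^2 * Real.cos (2*(n*θ)))
      (π^2 * ((θ/π)^2 - θ/π + 1/6)) := by
    convert hc using 2 with n
    · norm_num
      left
      congr 1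
      field_simp
    · norm_num
      ring
  have hz := hasSum_zeta_two
  have hs := (hz.sub hc').div_const 2
  have : (fun n : ℕ => (1/(n:ℝ)^2 - 1/(n:ℝ)^2 * Real.cos (2*(n*θ)))/2)
      = (fun n : ℕ => Real.sin (n*θ)^2/(n:ℝ)^2) := by
    funext n
    rcases Nat.eq_zero_or_pos n with h | h
    · simp [h]
    · have hn : ((n:ℝ))^2 ≠ 0 := by positivity
      rw [Real.sin_sq_eq_half_sub]
      field_simp
  rw [this] at hs
  rw [show (π*θ - θ^2)/2 = (π^2/6 - π^2*((θ/π)^2 - θ/π + 1/6))/2 by field_simp; ring]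
  exact hs

lemma sum_Icc_split (f : ℤ → ℝ) (n : ℕ) :
    ∑ j ∈ Icc (-(n:ℤ)) (n:ℤ), f j = f 0 + ∑ k ∈ Icc 1 n, (f (k:ℤ) + f (-(k:ℤ))) := by
  induction n with
  | zero => simp
  | succ n ih =>
    have hIcc : Icc (-((n+1:ℕ):ℤ)) ((n+1:ℕ):ℤ)
        = insert (-((n+1:ℕ):ℤ)) (insert ((n+1:ℕ):ℤ) (Icc (-(n:ℤ)) (n:ℤ))) := by
      ext j
      simp only [Finset.mem_Icc, Finset.mem_insert]
      push_cast
      omega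
    rw [hIcc, Finset.sum_insert (by simp only [Finset.mem_insert, Finset.mem_Icc]; push_cast; omega),
      Finset.sum_insert (by simp only [Finset.mem_Icc]; push_cast; omega), ih,
      Finset.sum_Icc_succ_top (by omega : 1 ≤ n+1)]
    push_cast
    ring

lemma sum_even_only (g : ℕ → ℝ) (m : ℕ) (hg : ∀ k, Odd k → g k = 0) :
    ∑ k ∈ Icc 1 (2*m), g k = ∑ l ∈ Icc 1 m, g (2*l) := by
  rw [← Finset.sum_image (f := g) (g := fun l => 2*l)
    (by intro a _ b _ h; dsimp at h; omega)]
  apply (Finset.sum_subset ?_ ?_).symm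
  · intro x hx
    simp only [Finset.mem_image, Finset.mem_Icc] at hx ⊢
    obtain ⟨l, ⟨ha, hb⟩, rfl⟩ := hx
    omega
  · intro x hx hnx
    simp only [Finset.mem_image, Finset.mem_Icc] at hx hnx
    rcases Nat.even_or_odd x with he | ho
    · obtain ⟨c, rfl⟩ := he
      exact absurd ⟨c, ⟨by omega, by omega⟩, by omega⟩ hnx
    · exact hg x ho

lemma sArc_neg (j : ℤ) (ψ : ℝ) : sArc (-j) ψ = sArc j ψ := by
  unfold sArc
  rcases eq_or_ne j 0 with rfl | hj
  · simp
  · rw [if_neg (neg_ne_zero.2 hj), if_neg hj, Int.cast_neg, neg_mul, Real.sin_neg,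
      mul_neg, neg_div_neg_eq]

lemma ptilde_neg (n : ℕ) (j : ℤ) : ptildeSqZ n (-j) = ptildeSqZ n j := by
  unfold ptildeSqZ
  have h : Even ((n:ℤ) + -j) ↔ Even ((n:ℤ) + j) := by
    simp [Int.even_add, even_neg]
  simp only [Int.natAbs_neg, h]

lemma ptilde_odd_zero (m : ℕ) (k : ℤ) (hk : Odd k) : ptildeSqZ (2*m) k = 0 := by
  unfold ptildeSqZ
  rw [if_neg]
  intro h
  have : Even k := by
    have h2 : Even ((2*m : ℕ) : ℤ) := by push_cast; exact even_two_mul _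
    rcases (Int.even_add.mp h).mp h2 with h3
    exact h3
  exact (Int.not_odd_iff_even.mpr this) hk

lemma sArc_zero (ψ : ℝ) : sArc 0 ψ = 2*ψ := if_pos rfl

lemma sArc_sq (l : ℕ) (hl : 1 ≤ l) (ψ : ℝ) :
    sArc ((2*l : ℕ) : ℤ) ψ ^ 2 = Real.sin (2*(l:ℝ)*ψ)^2/(l:ℝ)^2 := by
  unfold sArc
  rw [if_neg (by exact_mod_cast (by omega : ¬ (2*l = 0)))]
  have hl0 : ((l:ℝ)) ≠ 0 := by exact_mod_cast (by omega : l ≠ 0)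
  push_cast
  rw [show 2*(l:ℝ)*ψ = (2*(l:ℝ))*ψ by ring]
  rw [div_pow, mul_pow]
  field_simp

lemma reduction (m : ℕ) (ψ : ℝ) :
    (4*(m:ℝ)+1)/4 * muSq (2*m) ψ
      = 2*π^2 * (ptildeSqZ (2*m) 0 * (2*ψ)^2)
        + ∑ l ∈ Icc 1 m,
            (4*π^2 * (ptildeSqZ (2*m) ((2*l:ℕ):ℤ) * (Real.sin (2*(l:ℝ)*ψ)^2/(l:ℝ)^2))) := by
  unfold muSq
  rw [sum_Icc_split (fun j => ptildeSqZ (2*m) j * sArc j ψ ^ 2) (2*m)]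
  have step1 : ∑ k ∈ Icc 1 (2*m), (ptildeSqZ (2*m) (k:ℤ) * sArc (k:ℤ) ψ ^ 2
        + ptildeSqZ (2*m) (-(k:ℤ)) * sArc (-(k:ℤ)) ψ ^ 2)
      = ∑ k ∈ Icc 1 (2*m), 2 * (ptildeSqZ (2*m) (k:ℤ) * sArc (k:ℤ) ψ ^ 2) := by
    apply Finset.sum_congr rfl
    intro k _
    rw [ptilde_neg, sArc_neg]
    ring
  rw [step1, sum_even_only (fun k => 2 * (ptildeSqZ (2*m) (k:ℤ) * sArc (k:ℤ) ψ ^ 2)) m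
    (by
      intro k hk
      show 2 * (ptildeSqZ (2*m) (k:ℤ) * sArc (k:ℤ) ψ ^ 2) = 0
      rw [ptilde_odd_zero m (k:ℤ) (by exact_mod_cast hk)]
      ring)]
  have hm4 : (2*((2*m:ℕ):ℝ)+1) = 4*(m:ℝ)+1 := by push_cast; ring
  have hne : (4*(m:ℝ)+1) ≠ 0 := by positivity
  rw [hm4, sArc_zero]
  rw [mul_add, Finset.mul_sum, mul_add, Finset.mul_sum]
  have hc : (4*(m:ℝ)+1)/4 * (8*π^2/(4*(m:ℝ)+1)) = 2*π^2 := by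
    field_simp
    ring
  congr 1
  · rw [← mul_assoc, ← mul_assoc, hc]
    ring
  · apply Finset.sum_congr rfl
    intro l hl
    have hl1 : 1 ≤ l := (Finset.mem_Icc.mp hl).1
    rw [← mul_assoc, ← mul_assoc, hc, sArc_sq l hl1]
    push_cast
    ring

theorem muSq_even_limit (ψ : ℝ) (hψ : ψ ∈ Set.Icc 0 Real.pi) :
    Tendsto (fun m : ℕ => (4 * (m : ℝ) + 1) / 4 * muSq (2 * m) ψ) atTop
      (nhds (if ψ ≤ Real.pi / 2 then 4 * Real.pi * ψ
        else 12 * Real.pi * ψ - 4 * Real.pi ^ 2)) := by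
  obtain ⟨hψ0, hψπ⟩ := hψ
  have hπ := Real.pi_pos
  set L := if ψ ≤ Real.pi / 2 then 4 * Real.pi * ψ else 12 * Real.pi * ψ - 4 * Real.pi ^ 2 with hLdef
  set g : ℕ → ℝ := fun l => 4 * Real.sin (2*(l:ℝ)*ψ)^2/(l:ℝ)^2 with hgdef
  have hG : HasSum g (L - 8*ψ^2) := by
    by_cases hc : ψ ≤ Real.pi/2
    · have h := (hasSum_sin_sq (θ := 2*ψ) (by linarith) (by linarith)).mul_left 4
      have he : (fun k : ℕ => 4 * (Real.sin (k*(2*ψ))^2/(k:ℝ)^2)) = g := by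
        funext k
        simp only [hgdef]
        rw [show (k:ℝ)*(2*ψ) = 2*(k:ℝ)*ψ by ring]
        ring
      rw [he] at h
      rw [show L - 8*ψ^2 = 4 * ((π * (2 * ψ) - (2 * ψ) ^ 2) / 2) by
      rw [hLdef, if_pos hc]; ring]
      exact h
    · have hc' : Real.pi/2 < ψ := not_le.mp hc
      have h := (hasSum_sin_sq (θ := 2*Real.pi-2*ψ) (by linarith) (by linarith)).mul_left 4
      have he : (fun k : ℕ => 4 * (Real.sin (k*(2*Real.pi-2*ψ))^2/(k:ℝ)^2)) = g := by
        funext k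
        simp only [hgdef]
        rw [show (k:ℝ)*(2*Real.pi-2*ψ) = -(2*(k:ℝ)*ψ) + (k:ℕ)*(2*Real.pi) by push_cast; ring,
          Real.sin_add_nat_mul_two_pi, Real.sin_neg, neg_sq]
        ring
      rw [he] at h
      rw [show L - 8*ψ^2 = 4 * ((π * (2 * π - 2 * ψ) - (2 * π - 2 * ψ) ^ 2) / 2) by
      rw [hLdef, if_neg hc]; ring]
      exact h
  have hA : Tendsto (fun m : ℕ => 2*Real.pi^2 * (ptildeSqZ (2*m) 0 * (2*ψ)^2)) atTop
      (nhds (8*ψ^2)) := by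
    have h0 := tendsto_ptilde 0
    have h0' : Tendsto (fun m : ℕ => ptildeSqZ (2*m) 0) atTop (nhds ((Real.pi^2)⁻¹)) := by
      simpa using h0
    have h := (h0'.mul_const ((2*ψ)^2)).const_mul (2*Real.pi^2)
    have hv : 2*Real.pi^2 * ((Real.pi^2)⁻¹ * (2*ψ)^2) = 8*ψ^2 := by
      field_simp
      ring
    rw [hv] at h
    exact h
  set F : ℕ → ℕ → ℝ := fun m l => if l ∈ Icc 1 m then
      4*Real.pi^2 * (ptildeSqZ (2*m) ((2*l:ℕ):ℤ) * (Real.sin (2*(l:ℝ)*ψ)^2/(l:ℝ)^2)) else 0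
    with hFdef
  have hT : Tendsto (fun m : ℕ => ∑' l, F m l) atTop (nhds (∑' l, g l)) := by
    apply tendsto_tsum_of_dominated_convergence
      (bound := fun l : ℕ => 2*Real.pi*Real.sqrt 5*(Real.sqrt l/(l:ℝ)^2))
    · apply Summable.mul_left
      have base : Summable (fun l : ℕ => ((l:ℝ)^((3:ℝ)/2))⁻¹) :=
        Real.summable_nat_rpow_inv.mpr (by norm_num)
      apply base.congr
      intro l
      rcases Nat.eq_zero_or_pos l with rfl | hl
      · rw [Nat.cast_zero, Real.zero_rpow (by norm_num)]
        norm_num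
      · have hl0 : (0:ℝ) < l := by exact_mod_cast hl
        rw [show ((l:ℝ)^((3:ℝ)/2))⁻¹ = (l:ℝ)^(-((3:ℝ)/2)) from (Real.rpow_neg hl0.le _).symm,
          show Real.sqrt (l:ℝ) = (l:ℝ)^((1:ℝ)/2) from Real.sqrt_eq_rpow _,
          show ((l:ℝ)^2 : ℝ) = (l:ℝ)^((2:ℝ)) from by
            rw [← Real.rpow_natCast (l:ℝ) 2]; norm_num,
          ← Real.rpow_sub hl0]
        norm_num
    · intro l
      rcases Nat.eq_zero_or_pos l with rfl | hl
      · have : ∀ m : ℕ, F m 0 = 0 := by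
          intro m
          simp only [hFdef]
          exact if_neg (by simp)
        simp only [this]
        have hg0 : g 0 = 0 := by simp [hgdef]
        rw [hg0]
        exact tendsto_const_nhds
      · have h := ((tendsto_ptilde l).mul_const (Real.sin (2*(l:ℝ)*ψ)^2/(l:ℝ)^2)).const_mul
          (4*Real.pi^2)
        have hval : 4*Real.pi^2 * ((Real.pi^2)⁻¹ * (Real.sin (2*(l:ℝ)*ψ)^2/(l:ℝ)^2)) = g l := by
          rw [hgdef]
          have hl0 : ((l:ℝ))^2 ≠ 0 := by positivity
          field_simp
        rw [hval] at h
        apply h.congr'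
        filter_upwards [eventually_ge_atTop l] with m hm
        simp only [hFdef]
        rw [if_pos (Finset.mem_Icc.mpr ⟨hl, hm⟩)]
    · apply Filter.Eventually.of_forall
      intro m l
      simp only [hFdef]
      by_cases hmem : l ∈ Icc 1 m
      · rw [if_pos hmem]
        obtain ⟨hl1, hlm⟩ := Finset.mem_Icc.mp hmem
        have hp := ptilde_nonneg (2*m) ((2*l:ℕ):ℤ)
        have hl0 : (0:ℝ) < (l:ℝ) := by exact_mod_cast hl1
        rw [Real.norm_eq_abs, abs_of_nonneg (by positivity)]
        have hrhs : 2*Real.pi*Real.sqrt 5*(Real.sqrt l/(l:ℝ)^2)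
            = 4*Real.pi^2 * ((Real.sqrt 5 * Real.sqrt l/(2*Real.pi)) * (1/(l:ℝ)^2)) := by
          field_simp
          ring
        rw [hrhs]
        apply mul_le_mul_of_nonneg_left ?_ (by positivity)
        apply mul_le_mul (ptilde_le m l hl1 hlm) ?_ (by positivity) (by positivity)
        apply div_le_div_of_nonneg_right ?_ (by positivity)
        exact Real.sin_sq_le_one _
      · rw [if_neg hmem, norm_zero]
        positivity
  have hTsum : ∀ m : ℕ, ∑' l, F m l
      = ∑ l ∈ Icc 1 m, (4*Real.pi^2 * (ptildeSqZ (2*m) ((2*l:ℕ):ℤ)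
          * (Real.sin (2*(l:ℝ)*ψ)^2/(l:ℝ)^2))) := by
    intro m
    rw [tsum_eq_sum (s := Icc 1 m) (fun b hb => if_neg hb)]
    exact Finset.sum_congr rfl (fun l hl => if_pos hl)
  rw [hG.tsum_eq] at hT
  have hsum := hA.add hT
  rw [show 8*ψ^2 + (L - 8*ψ^2) = L by ring] at hsum
  apply hsum.congr'
  apply Filter.Eventually.of_forall
  intro m
  show 2*Real.pi^2 * (ptildeSqZ (2*m) 0 * (2*ψ)^2) + ∑' l, F m l
      = (4*(m:ℝ)+1)/4 * muSq (2*m) ψ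
  rw [hTsum m]
  exact (reduction m ψ).symm
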